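/- If T is a linear operator on entire functions with [T, d/dz] = aI and f ∈ ker T, then for every λ ∈ ℂ the translate S_λ f defined by (S_λ f)(z) = f(z+λ) satisfies T(S_λ f) = aλ · S_λ f; that is, each translate of f is an eigenvector of T with eigenvalue aλ. -/

import Mathlib

open Complex

set_option maxHeartbeats 1000000
set_option synthInstance.maxHeartbeats 400000

lemma Differentiable.entire_deriv {f : ℂ → ℂ} (hf : Differentiable ℂ f) :
    Differentiable ℂ (_root_.deriv f) := by
  rw [← analyticOnNhd_univ_iff_differentiable] at hf ⊢
  exact hf.deriv

/-- The space `H(ℂ)` of entire functions, as a submodule of `C(ℂ, ℂ)` with the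
compact-open topology (uniform convergence on compacts). -/
noncomputable def Entire : Submodule ℂ C(ℂ, ℂ) where
  carrier := {f | Differentiable ℂ f}
  add_mem' := fun hf hg => by simpa using hf.add hg
  zero_mem' := by
    show Differentiable ℂ ⇑(0 : C(ℂ, ℂ))
    rw [ContinuousMap.coe_zero]
    exact differentiable_const 0
  smul_mem' := fun c f hf => by simpa using hf.const_smul c

lemma Entire.diff (f : Entire) : Differentiable ℂ ⇑(f : C(ℂ, ℂ)) := f.2

/-- Differentiation `d/dz` on entire functions. -/
noncomputable def derivE (f : Entire) : Entire :=
  ⟨⟨deriv ⇑(f : C(ℂ, ℂ)), (Entire.diff f).entire_deriv.continuous⟩,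
    (Entire.diff f).entire_deriv⟩

/-- The translation operator `S_λ` on entire functions. -/
noncomputable def translE (lam : ℂ) (f : Entire) : Entire :=
  ⟨⟨fun z => (f : C(ℂ, ℂ)) (z + lam), by fun_prop⟩, (Entire.diff f).comp (by fun_prop)⟩

lemma cauchy_bound {F : ℂ → ℂ} (hF : Differentiable ℂ F) (z : ℂ) {R C : ℝ} (hR : 0 < R)
    (hC : ∀ w ∈ Metric.sphere z R, ‖F w‖ ≤ C) (n : ℕ) :
    ‖iteratedDeriv n F z‖ ≤ n.factorial * C / R ^ n := by
  lift R to NNReal using hR.le with R'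
  have hR0 : (0:ℝ) < R' := hR
  have h := hF.hasFPowerSeriesOnBall z (R := R') hR0
  have h1 := h.factorial_smul (1 : ℂ) n
  have hC0 : 0 ≤ C := by
    refine le_trans (norm_nonneg (F (z + R'))) (hC _ ?_)
    simp [Metric.mem_sphere, dist_eq_norm, _root_.abs_of_nonneg hR0.le]
  -- iteratedDeriv n F z = n! • p n (fun _ => 1)
  have h2 : iteratedDeriv n F z = n.factorial • (cauchyPowerSeries F z R' n fun _ => (1:ℂ)) := by
    rw [h1, iteratedDeriv_eq_iteratedFDeriv]
  rw [h2]
  have h3 : ‖(cauchyPowerSeries F z R' n fun _ => (1:ℂ))‖ ≤ ‖cauchyPowerSeries F z R' n‖ := by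
    simpa using (cauchyPowerSeries F z R' n).le_opNorm (fun _ => (1:ℂ))
  have h4 := norm_cauchyPowerSeries_le F z R' n
  have h5 : (∫ θ : ℝ in (0)..2 * Real.pi, ‖F (circleMap z R' θ)‖) ≤ 2 * Real.pi * C := by
    have : (2:ℝ) * Real.pi * C = ∫ θ : ℝ in (0)..2 * Real.pi, C := by
      simp [mul_comm]
    rw [this]
    apply intervalIntegral.integral_mono_on Real.two_pi_pos.le
    · exact ((hF.continuous.comp (continuous_circleMap _ _)).norm).intervalIntegrable _ _
    · exact intervalIntegrable_const
    · intro θ _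
      exact hC _ (circleMap_mem_sphere z hR0.le θ)
  have h6 : ‖cauchyPowerSeries F z R' n‖ ≤ C * (R':ℝ)⁻¹ ^ n := by
    refine h4.trans ?_
    rw [_root_.abs_of_nonneg hR0.le]
    gcongr
    calc (2 * Real.pi)⁻¹ * ∫ θ : ℝ in (0)..2 * Real.pi, ‖F (circleMap z R' θ)‖
        ≤ (2 * Real.pi)⁻¹ * (2 * Real.pi * C) := by
          gcongr

        _ = C := by field_simp
  calc ‖n.factorial • (cauchyPowerSeries F z R' n fun _ => (1:ℂ))‖
      = n.factorial * ‖(cauchyPowerSeries F z R' n fun _ => (1:ℂ))‖ := by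
        rw [← Nat.cast_smul_eq_nsmul ℝ, norm_smul]; simp
    _ ≤ n.factorial * (C * (R':ℝ)⁻¹ ^ n) := by
        gcongr
        exact h3.trans h6
    _ = n.factorial * C / (R':ℝ) ^ n := by
        rw [inv_pow]; ring

lemma coe_derivE_iter (f : Entire) (n : ℕ) :
    ⇑((derivE^[n] f : Entire) : C(ℂ, ℂ)) = iteratedDeriv n ⇑(f : C(ℂ, ℂ)) := by
  induction n with
  | zero => simp [iteratedDeriv_zero]
  | succ n ih =>
      rw [Function.iterate_succ_apply', iteratedDeriv_succ]
      show deriv ⇑((derivE^[n] f : Entire) : C(ℂ, ℂ)) = _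
      rw [ih]

lemma derivE_smul (c : ℂ) (g : Entire) : derivE (c • g) = c • derivE g := by
  apply Subtype.ext; apply ContinuousMap.ext; intro z
  show deriv ⇑((c • g : Entire) : C(ℂ, ℂ)) z = c • deriv ⇑(g : C(ℂ, ℂ)) z
  have : ⇑((c • g : Entire) : C(ℂ, ℂ)) = fun w => c • ⇑(g : C(ℂ, ℂ)) w := by
    ext w; rfl
  rw [this, deriv_fun_const_smul c ((Entire.diff g).differentiableAt)]

lemma derivE_zero : derivE (0 : Entire) = 0 := by
  apply Subtype.ext; apply ContinuousMap.ext; intro z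
  show deriv ⇑((0 : Entire) : C(ℂ, ℂ)) z = 0
  have : ⇑((0 : Entire) : C(ℂ, ℂ)) = fun _ => (0:ℂ) := rfl
  rw [this, deriv_const]

/-- Key: `T (D^[n+1] f) = ((n+1) a) • D^[n] f` when `T f = 0`. -/
lemma T_iter (T : Entire →L[ℂ] Entire) (a : ℂ)
    (hcomm : ∀ g : Entire, T (derivE g) - derivE (T g) = a • g)
    (f : Entire) (hker : T f = 0) :
    ∀ n : ℕ, T (derivE^[n+1] f) = (((n:ℂ)+1) * a) • derivE^[n] f := by
  intro n
  induction n with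
  | zero =>
      have h := hcomm f
      rw [hker, derivE_zero] at h
      have h2 : T (derivE f) = a • f := by rw [← h]; abel
      simpa using h2
  | succ n ih =>
      have h := hcomm (derivE^[n+1] f)
      rw [ih] at h
      rw [Function.iterate_succ_apply']
      have : T (derivE (derivE^[n+1] f)) =
          derivE ((((n:ℂ)+1) * a) • derivE^[n] f) + a • derivE^[n+1] f := by
        rw [← h]; ring_nf; abel
      rw [this, derivE_smul, ← Function.iterate_succ_apply' derivE n f]
      push_cast
      rw [← add_smul]
      ring_nf
      rw [show 1 + n = n.succ from by omega]

/-- The Taylor series of the translate, as a sum in `Entire`. -/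
lemma hasSum_translE (f : Entire) (lam : ℂ) :
    HasSum (fun n : ℕ => ((n.factorial : ℂ)⁻¹ * lam ^ n) • derivE^[n] f)
      (translE lam f) := by
  set F : ℂ → ℂ := ⇑(f : C(ℂ, ℂ)) with hF
  have hFd : Differentiable ℂ F := Entire.diff f
  -- reduce to a HasSum in C(ℂ, ℂ)
  show Filter.Tendsto _ _ _
  rw [Topology.IsInducing.tendsto_nhds_iff
    (Topology.IsInducing.subtypeVal (t := (Entire : Set C(ℂ,ℂ))))]
  apply Filter.Tendsto.congr (f₁ := fun s : Finset ℕ =>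
    ∑ n ∈ s, (((n.factorial : ℂ)⁻¹ * lam ^ n) • (derivE^[n] f : C(ℂ, ℂ))))
  · intro s
    simp
  rw [ContinuousMap.tendsto_iff_forall_isCompact_tendstoUniformlyOn]
  intro K hK
  obtain ⟨M, hM⟩ := hK.isBounded.subset_closedBall 0
  set R : ℝ := 2 * ‖lam‖ + 1 with hRdef
  have hR : 0 < R := by positivity
  obtain ⟨C, hC⟩ := (isCompact_closedBall (0:ℂ) (|M| + R)).exists_bound_of_continuousOn
    (hFd.continuous.continuousOn (s := Metric.closedBall 0 (|M| + R)))
  have hC0 : 0 ≤ C := le_trans (norm_nonneg (F 0)) (hC 0 (by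
    simp only [Metric.mem_closedBall, dist_self]; positivity))
  -- termwise bound
  have hbound : ∀ (n : ℕ) (z : ℂ), z ∈ K →
      ‖((n.factorial : ℂ)⁻¹ * lam ^ n) • (derivE^[n] f : C(ℂ, ℂ)) z‖ ≤
        C * (‖lam‖ / R) ^ n := by
    intro n z hz
    have hzM : ‖z‖ ≤ |M| := by
      have := hM hz
      simp only [Metric.mem_closedBall, dist_eq_norm, sub_zero] at this
      exact this.trans (le_abs_self M)
    have hcb : ‖iteratedDeriv n F z‖ ≤ n.factorial * C / R ^ n := by
      apply cauchy_bound hFd z hR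
      intro w hw
      apply hC
      simp only [Metric.mem_closedBall, dist_eq_norm, sub_zero]
      have hww : ‖w - z‖ = R := by
        simpa [Metric.mem_sphere, dist_eq_norm] using hw
      calc ‖w‖ = ‖z + (w - z)‖ := by ring_nf
        _ ≤ ‖z‖ + ‖w - z‖ := norm_add_le _ _
        _ ≤ |M| + R := by rw [hww]; gcongr
    have hcoe : (derivE^[n] f : C(ℂ, ℂ)) z = iteratedDeriv n F z := by
      rw [coe_derivE_iter]
    rw [hcoe, norm_smul]
    have h1 : ‖(n.factorial : ℂ)⁻¹ * lam ^ n‖ = (n.factorial : ℝ)⁻¹ * ‖lam‖ ^ n := by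
      simp [norm_mul, norm_pow]
    rw [h1]
    calc (n.factorial : ℝ)⁻¹ * ‖lam‖ ^ n * ‖iteratedDeriv n F z‖
        ≤ (n.factorial : ℝ)⁻¹ * ‖lam‖ ^ n * (n.factorial * C / R ^ n) := by
          gcongr
      _ = C * (‖lam‖ / R) ^ n := by
          rw [div_pow]
          have hne : (n.factorial : ℝ) ≠ 0 := Nat.cast_ne_zero.mpr n.factorial_ne_zero
          field_simp
  have hu : Summable (fun n : ℕ => C * (‖lam‖ / R) ^ n) := by
    apply Summable.mul_left
    apply summable_geometric_of_lt_one (by positivity)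
    rw [div_lt_one hR, hRdef]
    nlinarith [norm_nonneg lam]
  have hTU := tendstoUniformlyOn_tsum hu (f := fun n z =>
    ((n.factorial : ℂ)⁻¹ * lam ^ n) • (derivE^[n] f : C(ℂ, ℂ)) z) (s := K) hbound
  have heq : (fun z => ∑' n : ℕ, ((n.factorial : ℂ)⁻¹ * lam ^ n) •
      (derivE^[n] f : C(ℂ, ℂ)) z) = ⇑((translE lam f : Entire) : C(ℂ, ℂ)) := by
    funext z
    have hs := Complex.hasSum_taylorSeries_of_entire hFd z (z + lam)
    simp only [add_sub_cancel_left] at hs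
    have hfun : (fun n : ℕ => ((n.factorial : ℂ)⁻¹ * lam ^ n) •
        (derivE^[n] f : C(ℂ, ℂ)) z) =
        fun n : ℕ => (n.factorial : ℂ)⁻¹ • lam ^ n • iteratedDeriv n F z := by
      funext n
      rw [coe_derivE_iter]
      simp only [smul_eq_mul]
      ring
    rw [hfun, hs.tsum_eq]
    rfl
  rw [← heq]
  apply hTU.congr
  filter_upwards with s z hz
  simp

/-- If `[T, d/dz] = a • I` and `T f = 0`, then each translate `S_λ f` is an
eigenvector of `T` with eigenvalue `a λ`. -/
theorem stmt_5 (T : Entire →L[ℂ] Entire) (a : ℂ)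
    (hcomm : ∀ g : Entire, T (derivE g) - derivE (T g) = a • g)
    (f : Entire) (hker : T f = 0) :
    ∀ lam : ℂ, T (translE lam f) = (a * lam) • translE lam f := by
  intro lam
  have hS := hasSum_translE f lam
  have hT := hS.mapL T
  set g : ℕ → Entire := fun n => T (((n.factorial : ℂ)⁻¹ * lam ^ n) • derivE^[n] f) with hg
  have hg0 : g 0 = 0 := by
    simp [hg, hker]
  have hgs : ∀ n : ℕ, g (n + 1) = (a * lam) •
      (((n.factorial : ℂ)⁻¹ * lam ^ n) • derivE^[n] f) := by
    intro n
    rw [hg]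
    simp only [map_smul, T_iter T a hcomm f hker n, smul_smul]
    congr 1
    have hne : ((n.factorial : ℂ)) ≠ 0 := Nat.cast_ne_zero.mpr n.factorial_ne_zero
    have hne2 : ((n:ℂ) + 1) ≠ 0 := by
      intro hcon
      have := congrArg Complex.re hcon
      push_cast at this
      norm_num at this
      nlinarith [Nat.cast_nonneg (α := ℝ) n, this]
    rw [Nat.factorial_succ]
    push_cast
    field_simp
    ring
  have h1 : HasSum (fun n : ℕ => g (n + 1)) (T (translE lam f)) := by
    exact (hasSum_nat_add_iff (f := g) 1).mpr (by simpa [hg0] using hT)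
  have h2 : HasSum (fun n : ℕ => g (n + 1)) ((a * lam) • translE lam f) := by
    rw [show (fun n : ℕ => g (n + 1)) = (fun n : ℕ => (a * lam) •
      (((n.factorial : ℂ)⁻¹ * lam ^ n) • derivE^[n] f)) from funext hgs]
    exact hS.const_smul (a * lam)
  exact h1.unique h2
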